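/- Let $U$ be a nonempty finite subset of $\{-1,1\}^d$. The smallest subset $\mathcal{A}(U)$ of $\{-1,1\}^d$ containing $U$ and closed under coordinatewise max, coordinatewise min, and negation $x \mapsto -x$ equals all of $\{-1,1\}^d$ if and only if for every pair $i \neq j$ there exists $x \in U$ with $x_i \neq x_j$. -/

import Mathlib

/-- The smallest subset of `Fin d → Bool` containing `U` closed under coordinatewise
max, min and negation. -/
def algClosure {d : ℕ} (U : Set (Fin d → Bool)) : Set (Fin d → Bool) :=
  ⋂₀ {A : Set (Fin d → Bool) | U ⊆ A ∧
    (∀ x ∈ A, ∀ y ∈ A, x ⊓ y ∈ A ∧ x ⊔ y ∈ A) ∧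
    (∀ x ∈ A, (fun i => !(x i)) ∈ A)}

namespace AlgClosureAux

variable {d : ℕ} {U : Set (Fin d → Bool)}

lemma subset_closure : U ⊆ algClosure U := fun x hx =>
  Set.mem_sInter.2 fun _ hA => hA.1 hx

lemma closure_inf {x y : Fin d → Bool} (hx : x ∈ algClosure U) (hy : y ∈ algClosure U) :
    x ⊓ y ∈ algClosure U :=
  Set.mem_sInter.2 fun A hA =>
    (hA.2.1 x (Set.mem_sInter.1 hx A hA) y (Set.mem_sInter.1 hy A hA)).1

lemma closure_sup {x y : Fin d → Bool} (hx : x ∈ algClosure U) (hy : y ∈ algClosure U) :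
    x ⊔ y ∈ algClosure U :=
  Set.mem_sInter.2 fun A hA =>
    (hA.2.1 x (Set.mem_sInter.1 hx A hA) y (Set.mem_sInter.1 hy A hA)).2

lemma closure_neg {x : Fin d → Bool} (hx : x ∈ algClosure U) :
    (fun i => !(x i)) ∈ algClosure U :=
  Set.mem_sInter.2 fun A hA => hA.2.2 x (Set.mem_sInter.1 hx A hA)

lemma closure_inf' {ι : Type*} (f : ι → Fin d → Bool) :
    ∀ (s : Finset ι) (hs : s.Nonempty), (∀ j ∈ s, f j ∈ algClosure U) →
      s.inf' hs f ∈ algClosure U := by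
  intro s hs
  induction hs using Finset.Nonempty.cons_induction with
  | singleton j => intro h; simpa using h j (by simp)
  | cons j s hj hs ih =>
      intro h
      rw [Finset.inf'_cons hs]
      exact closure_inf (h j (by simp)) (ih fun k hk => h k (by simp [hk]))

lemma closure_sup' {ι : Type*} (f : ι → Fin d → Bool) :
    ∀ (s : Finset ι) (hs : s.Nonempty), (∀ j ∈ s, f j ∈ algClosure U) →
      s.sup' hs f ∈ algClosure U := by
  intro s hs
  induction hs using Finset.Nonempty.cons_induction with
  | singleton j => intro h; simpa using h j (by simp)
  | cons j s hj hs ih =>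
      intro h
      rw [Finset.sup'_cons hs]
      exact closure_sup (h j (by simp)) (ih fun k hk => h k (by simp [hk]))

lemma binf_true {ι : Type*} (s : Finset ι) (h : s.Nonempty) (g : ι → Bool)
    (hg : ∀ j ∈ s, g j = true) : s.inf' h g = true := by
  have : (⊤ : Bool) ≤ s.inf' h g := Finset.le_inf' h g (fun j hj => by simp [hg j hj])
  simpa using top_le_iff.1 this

lemma binf_false {ι : Type*} (s : Finset ι) (h : s.Nonempty) (g : ι → Bool)
    {j : ι} (hj : j ∈ s) (hg : g j = false) : s.inf' h g = false := by
  have : s.inf' h g ≤ (⊥ : Bool) := le_trans (Finset.inf'_le g hj) (by simp [hg])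
  simpa using le_bot_iff.1 this

lemma bsup_true {ι : Type*} (s : Finset ι) (h : s.Nonempty) (g : ι → Bool)
    {j : ι} (hj : j ∈ s) (hg : g j = true) : s.sup' h g = true := by
  have : (⊤ : Bool) ≤ s.sup' h g := le_trans (by simp [hg]) (Finset.le_sup' g hj)
  simpa using top_le_iff.1 this

lemma bsup_false {ι : Type*} (s : Finset ι) (h : s.Nonempty) (g : ι → Bool)
    (hg : ∀ j ∈ s, g j = false) : s.sup' h g = false := by
  have : s.sup' h g ≤ (⊥ : Bool) := Finset.sup'_le h g (fun j hj => by simp [hg j hj])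
  simpa using le_bot_iff.1 this

/-- the delta function: true exactly at `i` -/
def δ {d : ℕ} (i : Fin d) : Fin d → Bool := fun k => decide (k = i)

lemma delta_mem (hd : 2 ≤ d) (hU : U.Nonempty)
    (hsep : ∀ i j : Fin d, i ≠ j → ∃ x ∈ U, x i ≠ x j) (i : Fin d) :
    δ i ∈ algClosure U := by
  -- some element of the closure with value true at i
  obtain ⟨u, huU⟩ := hU
  have hbase : ∃ z ∈ algClosure U, z i = true := by
    cases h : u i
    · exact ⟨fun k => !(u k), closure_neg (subset_closure huU), by simp [h]⟩
    · exact ⟨u, subset_closure huU, h⟩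
  have hy : ∀ j : Fin d, ∃ y ∈ algClosure U, y i = true ∧ (j ≠ i → y j = false) := by
    intro j
    by_cases hj : j = i
    · obtain ⟨z, hz, hzi⟩ := hbase
      exact ⟨z, hz, hzi, fun h => absurd hj h⟩
    · obtain ⟨x, hxU, hx⟩ := hsep i j (Ne.symm hj)
      cases hxi : x i
      · refine ⟨fun k => !(x k), closure_neg (subset_closure hxU), by simp [hxi], fun _ => ?_⟩
        have hxj : x j = true := by
          cases h : x j
          · exact absurd (hxi.trans h.symm) hx
          · rfl
        simp [hxj]
      · refine ⟨x, subset_closure hxU, hxi, fun _ => ?_⟩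
        cases h : x j
        · rfl
        · exact absurd (hxi.trans h.symm) hx
  choose y hyC hyi hyj using hy
  set s : Finset (Fin d) := Finset.univ.erase i with hs
  have hsne : s.Nonempty := by
    have : Nontrivial (Fin d) := Fin.nontrivial_iff_two_le.2 hd
    obtain ⟨j, hj⟩ := exists_ne i
    exact ⟨j, Finset.mem_erase.2 ⟨hj, Finset.mem_univ j⟩⟩
  have key : δ i = s.inf' hsne y := by
    funext k
    rw [Finset.inf'_apply]
    by_cases hk : k = i
    · subst hk
      rw [binf_true s hsne (fun a => y a k) (fun j _ => hyi j)]
      simp [δ]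
    · rw [binf_false s hsne (fun a => y a k) (Finset.mem_erase.2 ⟨hk, Finset.mem_univ k⟩) (hyj k hk)]
      simp [δ, hk]
  rw [key]
  exact closure_inf' y s hsne (fun j _ => hyC j)

end AlgClosureAux

open AlgClosureAux in
theorem stmt13 {d : ℕ} (hd : 2 ≤ d) (U : Set (Fin d → Bool)) (hU : U.Nonempty)
    (hUfin : U.Finite) :
    algClosure U = Set.univ ↔
      ∀ i j : Fin d, i ≠ j → ∃ x ∈ U, x i ≠ x j := by
  constructor
  · intro h i j hij
    by_contra hc
    push_neg at hc
    have hc' : ∀ x ∈ U, x i = x j := hc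
    have hsub : algClosure U ⊆ {x : Fin d → Bool | x i = x j} := by
      apply Set.sInter_subset_of_mem
      refine ⟨fun x hx => hc' x hx, ?_, ?_⟩
      · intro x hx y hy
        constructor
        · show (x ⊓ y) i = (x ⊓ y) j
          simp only [Pi.inf_apply]
          rw [hx, hy]
        · show (x ⊔ y) i = (x ⊔ y) j
          simp only [Pi.sup_apply]
          rw [hx, hy]
      · intro x hx
        show (!(x i)) = (!(x j))
        rw [hx]
    have hδ : δ i ∈ algClosure U := h ▸ Set.mem_univ _
    have := hsub hδ
    simp only [Set.mem_setOf_eq, δ] at this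
    rw [decide_eq_decide] at this
    exact hij (this.1 trivial).symm
  · intro hsep
    apply Set.eq_univ_of_forall
    intro z
    classical
    set T : Finset (Fin d) := Finset.univ.filter (fun i => z i = true) with hT
    by_cases hTne : T.Nonempty
    · have key : z = T.sup' hTne δ := by
        funext k
        rw [Finset.sup'_apply]
        cases hzk : z k
        · rw [bsup_false]
          intro j hj
          have hjk : j ≠ k := by
            intro h; subst h
            rw [(Finset.mem_filter.1 hj).2] at hzk; exact Bool.noConfusion hzk
          simp [δ, Ne.symm hjk]
        · rw [bsup_true T hTne _ (Finset.mem_filter.2 ⟨Finset.mem_univ k, hzk⟩)]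
          simp [δ]
      rw [key]
      exact closure_sup' δ T hTne (fun j _ => delta_mem hd hU hsep j)
    · -- z is all-false
      have hz : ∀ k, z k = false := by
        intro k
        cases h : z k
        · rfl
        · exact absurd ⟨k, Finset.mem_filter.2 ⟨Finset.mem_univ k, h⟩⟩ hTne
      have h01 : (⟨0, by omega⟩ : Fin d) ≠ ⟨1, by omega⟩ := by
        intro h; simpa using congrArg Fin.val h
      have key : z = δ (⟨0, by omega⟩ : Fin d) ⊓ δ ⟨1, by omega⟩ := by
        funext k
        simp only [Pi.inf_apply, hz k, δ]
        by_cases h0 : k = (⟨0, by omega⟩ : Fin d)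
        · subst h0
          simp [h01]
        · simp [h0]
      rw [key]
      exact closure_inf (delta_mem hd hU hsep _) (delta_mem hd hU hsep _)
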